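/- arXiv:2306.02241 — 3 statements merged into one kernel-verified Lean document; each statement's English description precedes it below -/
import Mathlib

section
/- Ramanujan's identity: Li₂(1/3) − (1/6)·Li₂(1/9) = π²/18 − (1/6)·(log 3)². -/
open Real Filter Set

noncomputable def Li2 (z : ℝ) : ℝ := ∑' n : ℕ, z ^ (n + 1) / ((n : ℝ) + 1) ^ 2

private lemma aux_summable : Summable (fun n : ℕ => 1 / ((n : ℝ) + 1) ^ 2) := by
  have h := Real.summable_one_div_nat_pow.mpr (show 1 < 2 by norm_num)
  have := (summable_nat_add_iff 1).mpr h
  refine this.congr fun n => ?_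
  push_cast
  ring

private lemma li2_summable {x : ℝ} (h : |x| ≤ 1) :
    Summable (fun n : ℕ => x ^ (n + 1) / ((n : ℝ) + 1) ^ 2) := by
  refine Summable.of_norm_bounded aux_summable fun n => ?_
  rw [norm_div, norm_pow, Real.norm_eq_abs, Real.norm_eq_abs]
  rw [abs_of_nonneg (by positivity : (0:ℝ) ≤ ((n:ℝ)+1)^2)]
  gcongr
  exact pow_le_one₀ (abs_nonneg x) h

private lemma li2_hasSum {x : ℝ} (h : |x| ≤ 1) :
    HasSum (fun n : ℕ => x ^ (n + 1) / ((n : ℝ) + 1) ^ 2) (Li2 x) :=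
  (li2_summable h).hasSum

private lemma Li2_zero : Li2 0 = 0 := by
  simp [Li2]

private lemma li2_dup {x : ℝ} (h : |x| ≤ 1) : Li2 x + Li2 (-x) = Li2 (x ^ 2) / 2 := by
  have hneg : |(-x)| ≤ 1 := by rwa [abs_neg]
  have hx2 : |x ^ 2| ≤ 1 := by
    rw [abs_pow]; exact pow_le_one₀ (abs_nonneg x) h
  have hS : HasSum (fun n : ℕ => x ^ (n + 1) / ((n : ℝ) + 1) ^ 2
      + (-x) ^ (n + 1) / ((n : ℝ) + 1) ^ 2) (Li2 x + Li2 (-x)) :=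
    (li2_hasSum h).add (li2_hasSum hneg)
  have hinj : Function.Injective (fun k : ℕ => 2 * k + 1) := by
    intro a b hab
    simp only at hab
    omega
  have hS2 : HasSum (fun n : ℕ => x ^ (n + 1) / ((n : ℝ) + 1) ^ 2
      + (-x) ^ (n + 1) / ((n : ℝ) + 1) ^ 2) (Li2 (x ^ 2) / 2) := by
    rw [← hinj.hasSum_iff]
    · have h2 := (li2_hasSum hx2).div_const 2
      have key : ((fun n : ℕ => x ^ (n + 1) / ((n : ℝ) + 1) ^ 2
          + (-x) ^ (n + 1) / ((n : ℝ) + 1) ^ 2) ∘ (fun k => 2 * k + 1))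
          = fun k : ℕ => (x ^ 2) ^ (k + 1) / ((k : ℝ) + 1) ^ 2 / 2 := by
        funext k
        have he : Even (2 * k + 1 + 1) := ⟨k + 1, by ring⟩
        simp only [Function.comp_apply, he.neg_pow]
        rw [← pow_mul]
        have hk : ((k : ℝ) + 1) ≠ 0 := by positivity
        push_cast
        field_simp
        ring
      rw [key]
      exact h2
    · intro n hn
      have hev : Even n := by
        rcases Nat.even_or_odd n with he | ho
        · exact he
        · exfalso; obtain ⟨m, hm⟩ := ho
          exact hn ⟨m, by simpa using hm.symm⟩
      have hodd : Odd (n + 1) := Even.add_one hev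
      rw [hodd.neg_pow]
      ring
  exact hS.unique hS2

private lemma Li2_one : Li2 1 = π ^ 2 / 6 := by
  have h0 := hasSum_zeta_two
  have hinj : Function.Injective Nat.succ := Nat.succ_injective
  have h1 : HasSum (fun n : ℕ => (1 : ℝ) / ((n : ℝ) + 1) ^ 2) (π ^ 2 / 6) := by
    have h2 : HasSum ((fun n : ℕ => (1 : ℝ) / (n : ℝ) ^ 2) ∘ Nat.succ) (π ^ 2 / 6) := by
      rw [hinj.hasSum_iff]
      · exact h0
      · intro n hn
        have : n = 0 := by
          rcases n with _ | m
          · rfl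
          · exact absurd ⟨m, rfl⟩ hn
        simp [this]
    refine h2.congr fun n => ?_
    simp [Function.comp, Nat.succ_eq_add_one]
  have := (li2_hasSum (by norm_num : |(1:ℝ)| ≤ 1))
  simp only [one_pow] at this
  exact this.unique h1

private lemma li2_continuousOn : ContinuousOn Li2 (Icc (-1 : ℝ) 1) := by
  have : ContinuousOn (fun x : ℝ => ∑' n : ℕ, x ^ (n + 1) / ((n : ℝ) + 1) ^ 2)
      (Icc (-1 : ℝ) 1) := by
    refine continuousOn_tsum (fun n => ?_) aux_summable (fun n x hx => ?_)
    · exact ((continuousOn_id.pow (n + 1)).div_const _)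
    · rw [norm_div, norm_pow, Real.norm_eq_abs, Real.norm_eq_abs,
        abs_of_nonneg (by positivity : (0:ℝ) ≤ ((n:ℝ)+1)^2)]
      gcongr
      exact pow_le_one₀ (abs_nonneg x) (abs_le.mpr ⟨hx.1, hx.2⟩)
  exact this

private lemma li2_hasDerivAt {x : ℝ} (h : |x| < 1) (hx : x ≠ 0) :
    HasDerivAt Li2 (-Real.log (1 - x) / x) x := by
  set r : ℝ := (|x| + 1) / 2 with hr
  have hr0 : 0 < r := by positivity
  have hxr : |x| < r := by rw [hr]; linarith
  have hr1 : r < 1 := by rw [hr]; linarith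
  have key : HasDerivAt (fun z : ℝ => ∑' n : ℕ, z ^ (n + 1) / ((n : ℝ) + 1) ^ 2)
      (∑' n : ℕ, x ^ n / ((n : ℝ) + 1)) x := by
    refine hasDerivAt_tsum_of_isPreconnected (𝕜 := ℝ) (F := ℝ)
      (g := fun (n : ℕ) (z : ℝ) => z ^ (n + 1) / ((n : ℝ) + 1) ^ 2)
      (g' := fun (n : ℕ) (y : ℝ) => y ^ n / ((n : ℝ) + 1)) (u := fun n : ℕ => r ^ n)
      (summable_geometric_of_lt_one hr0.le hr1) (isOpen_Ioo (a := -r) (b := r))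
      (convex_Ioo _ _).isPreconnected (fun n y hy => ?_) (fun n y hy => ?_)
      (y₀ := x) ?_ ?_ ?_
    · have h1 : HasDerivAt (fun z : ℝ => z ^ (n + 1)) ((n + 1 : ℕ) * y ^ n) y := by
        simpa using hasDerivAt_pow (n + 1) y
      have h2 := h1.div_const (((n : ℝ) + 1) ^ 2)
      convert h2 using 1
      have hn : ((n : ℝ) + 1) ≠ 0 := by positivity
      · rfl
      push_cast
      field_simp
    · rw [norm_div, norm_pow, Real.norm_eq_abs, Real.norm_eq_abs,
        abs_of_nonneg (by positivity : (0:ℝ) ≤ (n:ℝ)+1)]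
      have hy' : |y| ≤ r := by
        rw [abs_le]; exact ⟨hy.1.le, hy.2.le⟩
      calc |y| ^ n / ((n:ℝ) + 1) ≤ r ^ n / 1 := by
            gcongr
            first | exact abs_nonneg y | exact hy' | simp
          _ = r ^ n := by ring
    · exact abs_lt.mp hxr
    · exact li2_summable h.le
    · exact abs_lt.mp hxr
  have hlog : HasSum (fun n : ℕ => x ^ n / ((n : ℝ) + 1)) (-Real.log (1 - x) / x) := by
    have h1 := hasSum_pow_div_log_of_abs_lt_one h
    have h2 := h1.div_const x
    have he : (fun i : ℕ => x ^ (i + 1) / ((i : ℝ) + 1) / x)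
        = fun n : ℕ => x ^ n / ((n : ℝ) + 1) := by
      funext n
      rw [pow_succ]
      field_simp
    rwa [he] at h2
  rw [← hlog.tsum_eq]
  exact key

private lemma landen {x : ℝ} (h0 : 0 ≤ x) (h1 : x ≤ 1 / 2) :
    Li2 (-x / (1 - x)) + Li2 x + Real.log (1 - x) ^ 2 / 2 = 0 := by
  set g : ℝ → ℝ := fun y => Li2 (-y / (1 - y)) + Li2 y + Real.log (1 - y) ^ 2 / 2 with hg
  have hsub : Icc (0:ℝ) (1/2) ⊆ Icc (-1:ℝ) 1 := by
    intro y hy; constructor <;> [linarith [hy.1]; linarith [hy.2]]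
  have hne : ∀ y ∈ Icc (0:ℝ) (1/2), (1 - y) ≠ 0 := by
    intro y hy; have := hy.2; intro hc; linarith [hy.2, (by linarith : y = 1)]
  have hphi : ContinuousOn (fun y : ℝ => -y / (1 - y)) (Icc (0:ℝ) (1/2)) := by
    exact (continuousOn_id.neg).div (continuousOn_const.sub continuousOn_id) hne
  have hmaps : MapsTo (fun y : ℝ => -y / (1 - y)) (Icc (0:ℝ) (1/2)) (Icc (-1:ℝ) 1) := by
    intro y hy
    have hy1 : 0 ≤ y := hy.1
    have hy2 : y ≤ 1/2 := hy.2
    have ht : (0:ℝ) < 1 - y := by linarith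
    simp only
    constructor
    · rw [le_div_iff₀ ht]
      linarith
    · rw [div_le_iff₀ ht]
      linarith
  have hcont : ContinuousOn g (Icc (0:ℝ) (1/2)) := by
    refine ((li2_continuousOn.comp hphi hmaps).add (li2_continuousOn.mono hsub)).add ?_
    refine ContinuousOn.div_const ?_ 2
    exact ((continuousOn_const.sub continuousOn_id).log hne).pow 2
  have hderiv : ∀ y ∈ Ioo (0:ℝ) (1/2), HasDerivAt g 0 y := by
    intro y hy
    obtain ⟨hy1, hy2⟩ := hy
    have ht : (0:ℝ) < 1 - y := by linarith
    have htne : (1 - y) ≠ 0 := ne_of_gt ht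
    set u : ℝ := -y / (1 - y) with hu
    have hu_neg : u < 0 := div_neg_of_neg_of_pos (by linarith) ht
    have hu_gt : -1 < u := by
      rw [hu, lt_div_iff₀ ht]
      linarith
    have hu_abs : |u| < 1 := abs_lt.mpr ⟨hu_gt, by linarith⟩
    have hu_ne : u ≠ 0 := ne_of_lt hu_neg
    have hinner : HasDerivAt (fun y : ℝ => -y / (1 - y)) (-1 / (1 - y) ^ 2) y := by
      have hnum : HasDerivAt (fun y : ℝ => -y) (-1) y := (hasDerivAt_id y).neg
      have hden : HasDerivAt (fun y : ℝ => 1 - y) (-1) y := (hasDerivAt_id y).const_sub 1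
      have := hnum.div hden htne
      convert this using 1
      · rfl
      · rfl
      · rfl
      field_simp
      ring
    have hchain : HasDerivAt (fun y : ℝ => Li2 (-y / (1 - y)))
        ((-Real.log (1 - u) / u) * (-1 / (1 - y) ^ 2)) y :=
      HasDerivAt.comp (h₂ := Li2) y (li2_hasDerivAt hu_abs hu_ne) hinner
    have hLi2 : HasDerivAt Li2 (-Real.log (1 - y) / y) y :=
      li2_hasDerivAt (abs_lt.mpr ⟨by linarith, by linarith⟩) (ne_of_gt hy1)
    have hlog : HasDerivAt (fun y : ℝ => Real.log (1 - y)) ((1 - y)⁻¹ * -1) y :=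
      (Real.hasDerivAt_log htne).comp y ((hasDerivAt_id y).const_sub 1)
    have hlogsq : HasDerivAt (fun y : ℝ => Real.log (1 - y) ^ 2 / 2)
        ((2 * Real.log (1 - y) ^ 1 * ((1 - y)⁻¹ * -1)) / 2) y :=
      (hlog.pow 2).div_const 2
    have htotal := (hchain.add hLi2).add hlogsq
    have h1u : 1 - u = (1 - y)⁻¹ := by
      rw [hu]
      field_simp
      ring
    have hval : (-Real.log (1 - u) / u) * (-1 / (1 - y) ^ 2) + (-Real.log (1 - y) / y)
        + (2 * Real.log (1 - y) ^ 1 * ((1 - y)⁻¹ * -1)) / 2 = 0 := by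
      rw [h1u, Real.log_inv, hu]
      have hyne : y ≠ 0 := ne_of_gt hy1
      field_simp
      ring
    rw [hval] at htotal
    exact htotal
  have hD : Convex ℝ (Icc (0:ℝ) (1/2)) := convex_Icc _ _
  have hdiff : DifferentiableOn ℝ g (interior (Icc (0:ℝ) (1/2))) := by
    rw [interior_Icc]
    intro y hy
    exact (hderiv y hy).differentiableAt.differentiableWithinAt
  have hd0 : ∀ y ∈ interior (Icc (0:ℝ) (1/2)), deriv g y = 0 := by
    rw [interior_Icc]
    intro y hy
    exact (hderiv y hy).deriv
  have hmono : MonotoneOn g (Icc (0:ℝ) (1/2)) :=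
    monotoneOn_of_deriv_nonneg hD hcont hdiff (fun y hy => (hd0 y hy).ge)
  have hanti : AntitoneOn g (Icc (0:ℝ) (1/2)) :=
    antitoneOn_of_deriv_nonpos hD hcont hdiff (fun y hy => (hd0 y hy).le)
  have h0mem : (0:ℝ) ∈ Icc (0:ℝ) (1/2) := by constructor <;> norm_num
  have hxmem : x ∈ Icc (0:ℝ) (1/2) := ⟨h0, h1⟩
  have hgx : g x = g 0 :=
    le_antisymm (hanti h0mem hxmem h0) (hmono h0mem hxmem h0)
  have hg0 : g 0 = 0 := by
    simp only [hg]
    norm_num [Li2_zero]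
  have := hgx.trans hg0
  simpa [hg] using this

theorem ramanujan_li2_third :
    Li2 (1 / 3) - (1 / 6) * Li2 (1 / 9) = Real.pi ^ 2 / 18 - (1 / 6) * Real.log 3 ^ 2 := by
  have l12 := landen (by norm_num : (0:ℝ) ≤ 1/2) (le_refl _)
  have l13 := landen (by norm_num : (0:ℝ) ≤ 1/3) (by norm_num)
  have l14 := landen (by norm_num : (0:ℝ) ≤ 1/4) (by norm_num)
  have d1 := li2_dup (x := 1) (by norm_num)
  have d12 := li2_dup (x := 1/2) (abs_le.mpr (by norm_num))
  have d13 := li2_dup (x := 1/3) (abs_le.mpr (by norm_num))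
  rw [show -(1/2:ℝ)/(1-1/2) = -1 by norm_num, show (1:ℝ)-1/2 = 1/2 by norm_num] at l12
  rw [show -(1/3:ℝ)/(1-1/3) = -(1/2) by norm_num, show (1:ℝ)-1/3 = 2/3 by norm_num] at l13
  rw [show -(1/4:ℝ)/(1-1/4) = -(1/3) by norm_num, show (1:ℝ)-1/4 = 3/4 by norm_num] at l14
  rw [show ((1:ℝ))^2 = 1 by norm_num, Li2_one] at d1
  rw [show ((1/2:ℝ))^2 = 1/4 by norm_num] at d12
  rw [show ((1/3:ℝ))^2 = 1/9 by norm_num] at d13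
  have lg2 : Real.log (1/2) = -Real.log 2 := by rw [one_div, Real.log_inv]
  have lg23 : Real.log (2/3) = Real.log 2 - Real.log 3 :=
    Real.log_div (by norm_num) (by norm_num)
  have lg34 : Real.log (3/4) = Real.log 3 - 2*Real.log 2 := by
    rw [Real.log_div (by norm_num) (by norm_num), show (4:ℝ) = 2^2 by norm_num, Real.log_pow]
    push_cast
    ring
  rw [lg2] at l12
  rw [lg23] at l13
  rw [lg34] at l14
  linear_combination (1/3)*d13 + (-1/3)*l14 + (-2/3)*d12 + (2/3)*l13 + (2/3)*l12 + (-2/3)*d1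
end

section
/- Li₃(1/2) = (7/8)·ζ(3) − (π²/12)·log 2 + (1/6)·(log 2)³. -/
open Real Set Filter Topology

lemma summable_base (k : ℕ) (hk : 2 ≤ k) {z : ℝ} (hz : |z| ≤ 1) :
    Summable (fun n : ℕ => z ^ (n + 1) / ((n : ℝ) + 1) ^ k) := by
  have hbase : Summable (fun n : ℕ => 1 / ((n : ℝ) + 1) ^ 2) := by
    have := (Real.summable_one_div_nat_pow (p := 2)).2 one_lt_two
    have := (summable_nat_add_iff 1).2 this
    simpa [Nat.cast_add] using this
  apply Summable.of_norm_bounded hbase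
  intro n
  rw [norm_div, norm_pow, norm_pow]
  have hn1 : (1:ℝ) ≤ ‖(n:ℝ) + 1‖ := by
    rw [Real.norm_eq_abs, abs_of_nonneg (by positivity)]; linarith [Nat.cast_nonneg (α := ℝ) n]
  apply div_le_div₀ zero_le_one
  · exact pow_le_one₀ (norm_nonneg _) (by rwa [Real.norm_eq_abs])
  · positivity
  · calc ((n:ℝ)+1)^2 = ‖(n:ℝ)+1‖^2 := by rw [Real.norm_eq_abs, abs_of_nonneg (by positivity)]
      _ ≤ ‖(n:ℝ)+1‖^k := pow_le_pow_right₀ (le_trans (by norm_num) hn1) hk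

lemma hasDerivAt_tsum_pow (k : ℕ) {z : ℝ} (hz : |z| < 1) :
    HasDerivAt (fun y : ℝ => ∑' n : ℕ, y ^ (n + 1) / ((n : ℝ) + 1) ^ (k + 1))
      (∑' n : ℕ, z ^ n / ((n : ℝ) + 1) ^ k) z := by
  set r : ℝ := (|z| + 1) / 2 with hr
  have hr0 : 0 < r := by positivity
  have hr1 : r < 1 := by rw [hr]; linarith
  have hzr : |z| < r := by rw [hr]; linarith
  have key := hasDerivAt_tsum_of_isPreconnected
    (u := fun n : ℕ => r ^ n)
    (g := fun (n : ℕ) (y : ℝ) => y ^ (n + 1) / ((n : ℝ) + 1) ^ (k + 1))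
    (g' := fun (n : ℕ) (y : ℝ) => y ^ n / ((n : ℝ) + 1) ^ k)
    (summable_geometric_of_lt_one hr0.le hr1)
    (Metric.isOpen_ball (x := (0:ℝ)) (ε := r))
    ((convex_ball (0:ℝ) r).isPreconnected)
    (y₀ := 0) (y := z) ?_ ?_ ?_ ?_ ?_
  · exact key
  · intro n y _
    have h1 : HasDerivAt (fun y : ℝ => y ^ (n + 1)) ((n + 1 : ℕ) * y ^ n) y := hasDerivAt_pow (n+1) y
    have h2 := h1.div_const (((n : ℝ) + 1) ^ (k + 1))
    refine h2.congr_deriv ?_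
    have hne : ((n:ℝ) + 1) ≠ 0 := by positivity
    field_simp [pow_succ]
    push_cast; ring
  · intro n y hy
    rw [mem_ball_zero_iff, Real.norm_eq_abs] at hy
    rw [Real.norm_eq_abs, abs_div, abs_pow, abs_pow]
    have h1 : |y| ^ n ≤ r ^ n := pow_le_pow_left₀ (abs_nonneg _) hy.le n
    have h2 : (1:ℝ) ≤ |(n:ℝ) + 1| ^ k := one_le_pow₀ (by
      rw [abs_of_nonneg (by positivity)]; linarith [Nat.cast_nonneg (α := ℝ) n])
    calc |y| ^ n / |(n:ℝ) + 1| ^ k ≤ |y| ^ n / 1 := by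
          apply div_le_div_of_nonneg_left (by positivity) (by norm_num) h2
      _ = |y| ^ n := div_one _
      _ ≤ r ^ n := h1
  · rw [mem_ball_zero_iff]; simpa using hr0
  · apply Summable.congr (f := fun _ : ℕ => (0:ℝ)) summable_zero
    intro n; simp
  · rw [mem_ball_zero_iff, Real.norm_eq_abs]; exact hzr

noncomputable def Li3 (z : ℝ) : ℝ := ∑' n : ℕ, z ^ (n + 1) / ((n : ℝ) + 1) ^ 3

noncomputable def L2 (z : ℝ) : ℝ := ∑' n : ℕ, z ^ (n + 1) / ((n : ℝ) + 1) ^ 2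

lemma hasSum_L2 {z : ℝ} (hz : |z| ≤ 1) :
    HasSum (fun n : ℕ => z ^ (n + 1) / ((n : ℝ) + 1) ^ 2) (L2 z) :=
  (summable_base 2 le_rfl hz).hasSum

lemma hasDerivAt_L2 {z : ℝ} (hz : |z| < 1) (hz0 : z ≠ 0) :
    HasDerivAt L2 (-Real.log (1 - z) / z) z := by
  have h := hasDerivAt_tsum_pow 1 hz
  have hsum : (∑' n : ℕ, z ^ n / ((n : ℝ) + 1) ^ 1) = -Real.log (1 - z) / z := by
    have hs := (hasSum_pow_div_log_of_abs_lt_one hz).div_const z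
    have heq : ∀ n : ℕ, z ^ (n + 1) / ((n:ℝ) + 1) / z = z ^ n / ((n:ℝ) + 1) ^ 1 := by
      intro n
      have hne : ((n:ℝ) + 1) ≠ 0 := by positivity
      field_simp [pow_succ]; ring
    simp only [heq] at hs
    exact hs.tsum_eq
  have h2 : HasDerivAt L2 (∑' n : ℕ, z ^ n / ((n : ℝ) + 1) ^ 1) z := by
    exact h
  rwa [hsum] at h2

lemma hasDerivAt_Li3 {z : ℝ} (hz : |z| < 1) (hz0 : z ≠ 0) :
    HasDerivAt Li3 (L2 z / z) z := by
  have h := hasDerivAt_tsum_pow 2 hz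
  have hsum : (∑' n : ℕ, z ^ n / ((n : ℝ) + 1) ^ 2) = L2 z / z := by
    have hs := (hasSum_L2 hz.le).div_const z
    have heq : ∀ n : ℕ, z ^ (n + 1) / ((n:ℝ) + 1) ^ 2 / z = z ^ n / ((n:ℝ) + 1) ^ 2 := by
      intro n
      have hne : ((n:ℝ) + 1) ≠ 0 := by positivity
      field_simp [pow_succ]; ring
    simp only [heq] at hs
    exact hs.tsum_eq
  have h2 : HasDerivAt Li3 (∑' n : ℕ, z ^ n / ((n : ℝ) + 1) ^ 2) z := by
    exact h
  rwa [hsum] at h2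

lemma continuousOn_pow_series (k : ℕ) (hk : 2 ≤ k) :
    ContinuousOn (fun z : ℝ => ∑' n : ℕ, z ^ (n + 1) / ((n : ℝ) + 1) ^ k) (Icc (-1) 1) := by
  have hbase : Summable (fun n : ℕ => 1 / ((n : ℝ) + 1) ^ 2) := by
    have := (Real.summable_one_div_nat_pow (p := 2)).2 one_lt_two
    have := (summable_nat_add_iff 1).2 this
    simpa [Nat.cast_add] using this
  apply continuousOn_tsum (fun n => (continuousOn_pow (n+1)).div_const _) hbase
  intro n x hx
  have hx1 : |x| ≤ 1 := abs_le.2 ⟨hx.1, hx.2⟩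
  rw [Real.norm_eq_abs, abs_div, abs_pow, abs_pow]
  have hn1 : (1:ℝ) ≤ |(n:ℝ) + 1| := by
    rw [abs_of_nonneg (by positivity)]; linarith [Nat.cast_nonneg (α := ℝ) n]
  apply div_le_div₀ zero_le_one (pow_le_one₀ (abs_nonneg _) hx1) (by positivity)
  calc ((n:ℝ)+1)^2 = |(n:ℝ)+1|^2 := by rw [abs_of_nonneg (by positivity)]
    _ ≤ |(n:ℝ)+1|^k := pow_le_pow_right₀ hn1 hk

lemma continuousOn_Li3 : ContinuousOn Li3 (Icc (-1) 1) := by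
  have := continuousOn_pow_series 3 (by norm_num)
  exact this

lemma continuousOn_L2 : ContinuousOn L2 (Icc (-1) 1) := by
  have := continuousOn_pow_series 2 le_rfl
  exact this

lemma L2_zero : L2 0 = 0 := by simp [L2]

lemma Li3_zero : Li3 0 = 0 := by simp [Li3]

lemma L2_one : L2 1 = Real.pi ^ 2 / 6 := by
  have h := hasSum_zeta_two
  rw [show (Real.pi ^ 2 / 6) = Real.pi ^ 2 / 6 + ∑ i ∈ Finset.range 1, (1:ℝ) / (i:ℝ) ^ 2 by simp] at h
  rw [← hasSum_nat_add_iff 1] at h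
  have h2 : HasSum (fun n : ℕ => (1:ℝ) ^ (n + 1) / ((n:ℝ) + 1) ^ 2) (Real.pi ^ 2 / 6) := by
    refine h.congr_fun fun n => ?_
    push_cast
    norm_num
  exact ((hasSum_L2 (by norm_num)).unique h2)

lemma hasSum_zeta3 : HasSum (fun n : ℕ => 1 / ((n : ℝ) + 1) ^ 3)
    (∑' n : ℕ, 1 / ((n : ℝ) + 1) ^ 3) := by
  have hs : Summable (fun n : ℕ => 1 / ((n : ℝ) + 1) ^ 3) := by
    have := summable_base 3 (by norm_num) (z := 1) (by norm_num)
    simpa using this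
  exact hs.hasSum

lemma Li3_one : Li3 1 = ∑' n : ℕ, 1 / ((n : ℝ) + 1) ^ 3 := by simp [Li3]

lemma Li3_neg_one : Li3 (-1) = -(3/4) * ∑' n : ℕ, 1 / ((n : ℝ) + 1) ^ 3 := by
  set S := ∑' n : ℕ, 1 / ((n : ℝ) + 1) ^ 3 with hS
  set f : ℕ → ℝ := fun n => 1 / ((n : ℝ) + 1) ^ 3 with hf
  have hfS : HasSum f S := hasSum_zeta3
  have hO : HasSum (fun k => f (2 * k + 1)) (S / 8) := by
    have h := hfS.mul_left (1/8)
    rw [show S / 8 = 1/8 * S by ring]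
    refine HasSum.congr_fun h fun k => ?_
    simp only [hf]
    push_cast
    have h1 : ((2:ℝ) * k + 1 + 1) ^ 3 = 8 * ((k:ℝ) + 1) ^ 3 := by ring
    rw [h1, one_div, mul_inv, mul_one_div, one_div, div_eq_mul_inv]
  have hEsum : Summable (fun k => f (2 * k)) :=
    hfS.summable.comp_injective fun a b h => by omega
  set E := ∑' k, f (2 * k) with hE
  have hEs : HasSum (fun k => f (2 * k)) E := hEsum.hasSum
  have hsplit : E + S / 8 = S := (hEs.even_add_odd hO).unique hfS
  have hgE : HasSum (fun k => (-1:ℝ) ^ (2 * k + 1) / ((2 * k : ℕ) + 1 : ℝ) ^ 3) (-E) := by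
    refine HasSum.congr_fun hEs.neg fun k => ?_
    simp only [hf]
    rw [pow_succ, pow_mul]
    push_cast
    ring
  have hgO : HasSum (fun k => (-1:ℝ) ^ (2 * k + 1 + 1) / ((2 * k + 1 : ℕ) + 1 : ℝ) ^ 3)
      (S / 8) := by
    refine HasSum.congr_fun hO fun k => ?_
    simp only [hf]
    rw [show 2 * k + 1 + 1 = 2 * (k + 1) by ring, pow_mul]
    push_cast
    ring_nf
  have hg : HasSum (fun n : ℕ => (-1:ℝ) ^ (n + 1) / ((n : ℕ) + 1 : ℝ) ^ 3) (-E + S / 8) :=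
    HasSum.even_add_odd hgE hgO
  have : Li3 (-1) = -E + S / 8 := by
    rw [Li3]
    exact hg.tsum_eq ▸ rfl
  rw [this]
  linarith [hsplit]

open Filter Topology Set

lemma const_on_Ioo {a b : ℝ} {h : ℝ → ℝ} (hd : ∀ x ∈ Ioo a b, HasDerivAt h 0 x) :
    ∀ x ∈ Ioo a b, ∀ y ∈ Ioo a b, h x = h y := by
  have key : ∀ x ∈ Ioo a b, ∀ y ∈ Ioo a b, x ≤ y → h y = h x := by
    intro x hx y hy hxy
    have hsub : Icc x y ⊆ Ioo a b := fun t ht => ⟨lt_of_lt_of_le hx.1 ht.1, lt_of_le_of_lt ht.2 hy.2⟩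
    exact constant_of_has_deriv_right_zero
      (fun t ht => ((hd t (hsub ht)).continuousAt).continuousWithinAt)
      (fun t ht => ((hd t (hsub (Ico_subset_Icc_self ht))).hasDerivWithinAt))
      y ⟨hxy, le_rfl⟩
  intro x hx y hy
  rcases le_total x y with hxy | hxy
  · exact (key x hx y hy hxy).symm
  · exact key y hy x hx hxy

lemma const_eval {s : Set ℝ} {h : ℝ → ℝ} {a c : ℝ}
    (hconst : ∀ x ∈ s, ∀ y ∈ s, h x = h y)
    (hne : (𝓝[s] a).NeBot) (hlim : Tendsto h (𝓝[s] a) (𝓝 c)) {x : ℝ} (hx : x ∈ s) :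
    h x = c := by
  have h2 : Tendsto h (𝓝[s] a) (𝓝 (h x)) := by
    have : ∀ᶠ y in 𝓝[s] a, h y = h x := by
      filter_upwards [self_mem_nhdsWithin] with y hy
      exact hconst y hy x hx
    exact Tendsto.congr' (by filter_upwards [this] with y hy; exact hy.symm) tendsto_const_nhds
  exact tendsto_nhds_unique h2 hlim

lemma tendsto_log_one_sub_mul_log : Tendsto (fun u : ℝ => Real.log (1 - u) * Real.log u)
    (𝓝[>] (0:ℝ)) (𝓝 0) := by
  have hd : HasDerivAt (fun u : ℝ => Real.log (1 - u)) (-1) 0 := by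
    have h1 : HasDerivAt (fun u : ℝ => 1 - u) (-1) 0 := (hasDerivAt_id 0).const_sub 1
    have h2 := (Real.hasDerivAt_log (by norm_num : (1:ℝ) - 0 ≠ 0)).comp 0 h1
    simpa [Function.comp_def] using h2
  have h1 : Tendsto (fun u : ℝ => Real.log (1 - u) / u) (𝓝[>] 0) (𝓝 (-1)) := by
    have := (hasDerivAt_iff_tendsto_slope.1 hd).mono_left
      (nhdsWithin_mono 0 fun t (ht : t ∈ Ioi (0:ℝ)) => ne_of_gt ht)
    refine this.congr fun u => ?_
    simp [slope_def_field, div_eq_inv_mul]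
  have h2 : Tendsto (fun u : ℝ => u * Real.log u) (𝓝[>] 0) (𝓝 0) := by
    have := tendsto_log_mul_rpow_nhdsGT_zero one_pos
    refine this.congr fun u => ?_
    rw [Real.rpow_one, mul_comm]
  have := h1.mul h2
  rw [show (-1 : ℝ) * 0 = 0 by ring] at this
  refine this.congr' ?_
  filter_upwards [self_mem_nhdsWithin] with u (hu : (0:ℝ) < u)
  field_simp

lemma tendsto_comp_within {φ : ℝ → ℝ} {s t : Set ℝ} {a b : ℝ} {f : ℝ → ℝ}
    (hf : ContinuousOn f t) (hb : b ∈ t)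
    (hφ : Tendsto φ (𝓝[s] a) (𝓝 b)) (hmem : ∀ x ∈ s, φ x ∈ t) :
    Tendsto (fun x => f (φ x)) (𝓝[s] a) (𝓝 (f b)) := by
  have h1 : Tendsto φ (𝓝[s] a) (𝓝[t] b) :=
    tendsto_nhdsWithin_of_tendsto_nhds_of_eventually_within φ hφ
      (by filter_upwards [self_mem_nhdsWithin] with x hx; exact hmem x hx)
  exact (hf b hb).tendsto.comp h1

lemma neBot_Ioo_right {a b : ℝ} (h : a < b) : (𝓝[Ioo a b] b).NeBot := by
  rw [← mem_closure_iff_nhdsWithin_neBot, closure_Ioo h.ne]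
  exact ⟨h.le, le_rfl⟩

lemma neBot_Ioo_left {a b : ℝ} (h : a < b) : (𝓝[Ioo a b] a).NeBot := by
  rw [← mem_closure_iff_nhdsWithin_neBot, closure_Ioo h.ne]
  exact ⟨le_rfl, h.le⟩

lemma L2_reflection {x : ℝ} (hx : x ∈ Ioo (0:ℝ) 1) :
    L2 x + L2 (1 - x) + Real.log x * Real.log (1 - x) = Real.pi ^ 2 / 6 := by
  set h : ℝ → ℝ := fun x => L2 x + L2 (1 - x) + Real.log x * Real.log (1 - x) with hh
  have hd : ∀ y ∈ Ioo (0:ℝ) 1, HasDerivAt h 0 y := by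
    intro y hy
    obtain ⟨hy0, hy1⟩ := hy
    have hy1' : (0:ℝ) < 1 - y := by linarith
    have h1 : HasDerivAt L2 (-Real.log (1 - y) / y) y :=
      hasDerivAt_L2 (by rw [abs_of_pos hy0]; linarith) (ne_of_gt hy0)
    have hin : HasDerivAt (fun x : ℝ => 1 - x) (-1) y := (hasDerivAt_id y).const_sub 1
    have h2' : HasDerivAt L2 (-Real.log (1 - (1 - y)) / (1 - y)) (1 - y) :=
      hasDerivAt_L2 (by rw [abs_of_pos hy1']; linarith) (ne_of_gt hy1')
    rw [show (1:ℝ) - (1 - y) = y by ring] at h2'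
    have h2 : HasDerivAt (fun x : ℝ => L2 (1 - x)) (-Real.log y / (1 - y) * -1) y :=
      h2'.comp y hin
    have h3 : HasDerivAt Real.log y⁻¹ y := Real.hasDerivAt_log (ne_of_gt hy0)
    have h4' : HasDerivAt Real.log (1 - y)⁻¹ (1 - y) := Real.hasDerivAt_log (ne_of_gt hy1')
    have h4 : HasDerivAt (fun x : ℝ => Real.log (1 - x)) ((1 - y)⁻¹ * -1) y :=
      h4'.comp y hin
    have h5 := h3.mul h4
    have H := (h1.add h2).add h5
    refine H.congr_deriv ?_
    field_simp
    ring
  have hconst := const_on_Ioo hd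
  have hne : (𝓝[Ioo (0:ℝ) 1] 1).NeBot := neBot_Ioo_right one_pos
  have hmem : ∀ y ∈ Ioo (0:ℝ) 1, y ∈ Icc (-1:ℝ) 1 := fun y hy => ⟨by linarith [hy.1], hy.2.le⟩
  have hmem' : ∀ y ∈ Ioo (0:ℝ) 1, 1 - y ∈ Icc (-1:ℝ) 1 :=
    fun y hy => ⟨by linarith [hy.2], by linarith [hy.1]⟩
  have t1 : Tendsto L2 (𝓝[Ioo (0:ℝ) 1] 1) (𝓝 (L2 1)) :=
    tendsto_comp_within (φ := id) continuousOn_L2 (by norm_num)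
      (tendsto_id.mono_left nhdsWithin_le_nhds) hmem
  have t2 : Tendsto (fun y => L2 (1 - y)) (𝓝[Ioo (0:ℝ) 1] 1) (𝓝 (L2 0)) := by
    have : Tendsto (fun y : ℝ => 1 - y) (𝓝[Ioo (0:ℝ) 1] 1) (𝓝 0) := by
      have : Tendsto (fun y : ℝ => 1 - y) (𝓝 1) (𝓝 (1 - 1)) :=
        (continuous_const.sub continuous_id).tendsto 1
      rw [sub_self] at this
      exact this.mono_left nhdsWithin_le_nhds
    exact tendsto_comp_within continuousOn_L2 (by norm_num) this hmem'
  have t3 : Tendsto (fun y => Real.log y * Real.log (1 - y)) (𝓝[Ioo (0:ℝ) 1] 1) (𝓝 0) := by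
    have hφ : Tendsto (fun y : ℝ => 1 - y) (𝓝[Ioo (0:ℝ) 1] 1) (𝓝[>] 0) := by
      apply tendsto_nhdsWithin_of_tendsto_nhds_of_eventually_within
      · have : Tendsto (fun y : ℝ => 1 - y) (𝓝 1) (𝓝 (1 - 1)) :=
          (continuous_const.sub continuous_id).tendsto 1
        rw [sub_self] at this
        exact this.mono_left nhdsWithin_le_nhds
      · filter_upwards [self_mem_nhdsWithin] with y hy
        exact sub_pos.2 hy.2
    have := tendsto_log_one_sub_mul_log.comp hφ
    refine this.congr fun y => ?_
    simp only [Function.comp]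
    rw [show (1:ℝ) - (1 - y) = y by ring]
  have hlim : Tendsto h (𝓝[Ioo (0:ℝ) 1] 1) (𝓝 (Real.pi ^ 2 / 6)) := by
    have := (t1.add t2).add t3
    rw [L2_one, L2_zero] at this
    simpa using this
  exact const_eval hconst hne hlim hx

lemma L2_landen {y : ℝ} (hy : y ∈ Ioo (0:ℝ) (1/2)) :
    L2 (y / (y - 1)) + L2 y + (1/2) * Real.log (1 - y) ^ 2 = 0 := by
  set h : ℝ → ℝ := fun y => L2 (y / (y - 1)) + L2 y + (1/2) * Real.log (1 - y) ^ 2 with hh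
  have hd : ∀ t ∈ Ioo (0:ℝ) (1/2), HasDerivAt h 0 t := by
    intro t ht
    obtain ⟨ht0, ht1⟩ := ht
    have ht1' : (0:ℝ) < 1 - t := by linarith
    have htm1 : t - 1 ≠ 0 := by intro hc; nlinarith [hc]
    set z := t / (t - 1) with hz
    have hzval : z = -(t / (1 - t)) := by rw [hz, show t - 1 = -(1-t) by ring, div_neg]
    have hzneg : z < 0 := by rw [hzval]; simp; positivity
    have hzgt : -1 < z := by
      rw [hzval, neg_lt, neg_neg]
      rw [div_lt_one ht1']
      linarith
    have habs : |z| < 1 := abs_lt.2 ⟨hzgt, by linarith⟩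
    have h1z : (1:ℝ) - z = (1 - t)⁻¹ := by rw [hz]; field_simp; ring
    -- inner derivative
    have hinner : HasDerivAt (fun x : ℝ => x / (x - 1)) ((1 * (t-1) - t * 1)/(t-1)^2) t :=
      (hasDerivAt_id t).div ((hasDerivAt_id t).sub_const 1) htm1
    have hL2z : HasDerivAt L2 (-Real.log (1 - z) / z) z := hasDerivAt_L2 habs (ne_of_lt hzneg)
    rw [h1z, Real.log_inv] at hL2z
    have hA : HasDerivAt (fun x : ℝ => L2 (x / (x - 1)))
        (- -Real.log (1 - t) / z * ((1 * (t-1) - t * 1)/(t-1)^2)) t := by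
      have := hL2z.comp t hinner; exact this
    have hB : HasDerivAt L2 (-Real.log (1 - t) / t) t :=
      hasDerivAt_L2 (by rw [abs_of_pos ht0]; linarith) (ne_of_gt ht0)
    have hin : HasDerivAt (fun x : ℝ => 1 - x) (-1) t := (hasDerivAt_id t).const_sub 1
    have h4 : HasDerivAt (fun x : ℝ => Real.log (1 - x)) ((1 - t)⁻¹ * -1) t :=
      (Real.hasDerivAt_log (ne_of_gt ht1')).comp t hin
    have h5 := (h4.pow 2).const_mul (1/2 : ℝ)
    have H := (hA.add hB).add h5
    refine H.congr_deriv ?_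
    rw [hz]
    field_simp
    ring
  have hconst := const_on_Ioo hd
  have hne : (𝓝[Ioo (0:ℝ) (1/2)] 0).NeBot := neBot_Ioo_left (by norm_num)
  have hmem : ∀ t ∈ Ioo (0:ℝ) (1/2), t ∈ Icc (-1:ℝ) 1 :=
    fun t ht => ⟨by linarith [ht.1], by linarith [ht.2]⟩
  have hmem' : ∀ t ∈ Ioo (0:ℝ) (1/2), t / (t - 1) ∈ Icc (-1:ℝ) 1 := by
    intro t ht
    have ht1' : (0:ℝ) < 1 - t := by linarith [ht.2]
    have hzval : t / (t - 1) = -(t / (1 - t)) := by rw [show t - 1 = -(1-t) by ring, div_neg]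
    constructor
    · rw [hzval, neg_le, neg_neg, div_le_one ht1']; linarith [ht.2]
    · rw [hzval]
      have : 0 ≤ t / (1 - t) := div_nonneg ht.1.le ht1'.le
      linarith
  have t1 : Tendsto (fun t : ℝ => L2 (t / (t - 1))) (𝓝[Ioo (0:ℝ) (1/2)] 0) (𝓝 (L2 0)) := by
    apply tendsto_comp_within continuousOn_L2 (by norm_num)
    · have hc : ContinuousAt (fun t : ℝ => t / (t - 1)) 0 := by
        apply ContinuousAt.div continuousAt_id (continuousAt_id.sub continuousAt_const)
        norm_num
      have h0 := hc.tendsto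
      norm_num at h0
      exact h0.mono_left nhdsWithin_le_nhds
    · exact hmem'
  have t2 : Tendsto L2 (𝓝[Ioo (0:ℝ) (1/2)] 0) (𝓝 (L2 0)) :=
    tendsto_comp_within (φ := id) continuousOn_L2 (by norm_num)
      (tendsto_id.mono_left nhdsWithin_le_nhds) hmem
  have t3 : Tendsto (fun t : ℝ => (1/2) * Real.log (1 - t) ^ 2) (𝓝[Ioo (0:ℝ) (1/2)] 0)
      (𝓝 ((1/2) * Real.log (1 - 0) ^ 2)) := by
    have hlog : ContinuousAt (fun t : ℝ => Real.log (1 - t)) 0 := by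
      have := ContinuousAt.comp (f := fun t : ℝ => 1 - t) (g := Real.log) (x := (0:ℝ))
        (Real.continuousAt_log (by norm_num)) ((continuous_const.sub continuous_id).continuousAt)
      exact this
    have hc : ContinuousAt (fun t : ℝ => (1/2) * Real.log (1 - t) ^ 2) 0 :=
      continuousAt_const.mul (hlog.pow 2)
    exact hc.tendsto.mono_left nhdsWithin_le_nhds
  have hlim : Tendsto h (𝓝[Ioo (0:ℝ) (1/2)] 0) (𝓝 0) := by
    have heq := (t1.add t2).add t3
    rw [L2_zero] at heq
    norm_num at heq
    rw [nhdsWithin_Ioo_eq_nhdsGT (by norm_num : (0:ℝ) < 1/2)]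
    exact heq
  exact const_eval hconst hne hlim hy

lemma F_eq : ∀ x ∈ Ioo (1/2:ℝ) 1,
    Li3 x + Li3 (1 - x) + Li3 (1 - 1/x)
      - Real.log x ^ 3 / 6 - (Real.pi^2/6) * Real.log x
      + (1/2) * Real.log x ^ 2 * Real.log (1 - x)
    = ∑' n : ℕ, 1 / ((n:ℝ) + 1) ^ 3 := by
  set F : ℝ → ℝ := fun x => Li3 x + Li3 (1 - x) + Li3 (1 - 1/x)
      - Real.log x ^ 3 / 6 - (Real.pi^2/6) * Real.log x
      + (1/2) * Real.log x ^ 2 * Real.log (1 - x) with hF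
  have hd : ∀ x ∈ Ioo (1/2:ℝ) 1, HasDerivAt F 0 x := by
    intro x hx
    obtain ⟨hx12, hx1⟩ := hx
    have hx0 : (0:ℝ) < x := by linarith
    have hx1' : (0:ℝ) < 1 - x := by linarith
    have hx12' : 1 - x < 1/2 := by linarith
    have hxinv : 1 < 1/x := by rw [lt_div_iff₀ hx0]; linarith
    have hxinv2 : 1/x < 2 := by rw [div_lt_iff₀ hx0]; linarith
    set w := 1 - 1/x with hw
    have hwneg : w < 0 := by rw [hw]; linarith
    have hwgt : -1 < w := by rw [hw]; linarith
    have hw0 : w ≠ 0 := ne_of_lt hwneg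
    have hwabs : |w| < 1 := abs_lt.2 ⟨hwgt, by linarith⟩
    -- derivatives
    have hA : HasDerivAt Li3 (L2 x / x) x :=
      hasDerivAt_Li3 (by rw [abs_of_pos hx0]; linarith) (ne_of_gt hx0)
    have hin : HasDerivAt (fun t : ℝ => 1 - t) (-1) x := (hasDerivAt_id x).const_sub 1
    have hB : HasDerivAt (fun t : ℝ => Li3 (1 - t)) (L2 (1-x) / (1-x) * -1) x :=
      (hasDerivAt_Li3 (by rw [abs_of_pos hx1']; linarith) (ne_of_gt hx1')).comp x hin
    have hinv : HasDerivAt (fun t : ℝ => 1 - 1/t) (-(-(x^2)⁻¹)) x := by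
      have h1 : HasDerivAt (fun t : ℝ => 1/t) (-(x^2)⁻¹) x := by
        simpa [one_div] using (hasDerivAt_inv (ne_of_gt hx0))
      exact h1.const_sub 1
    have hC : HasDerivAt (fun t : ℝ => Li3 (1 - 1/t)) (L2 w / w * -(-(x^2)⁻¹)) x :=
      by have := (hasDerivAt_Li3 hwabs hw0).comp x hinv; exact this
    have hlog : HasDerivAt Real.log x⁻¹ x := Real.hasDerivAt_log (ne_of_gt hx0)
    have hlog1 : HasDerivAt (fun t : ℝ => Real.log (1 - t)) ((1-x)⁻¹ * -1) x :=
      (Real.hasDerivAt_log (ne_of_gt hx1')).comp x hin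
    have hD := (hlog.pow 3).div_const 6
    have hE := hlog.const_mul (Real.pi^2/6)
    have hG := ((hlog.pow 2).const_mul (1/2 : ℝ)).mul hlog1
    have H := ((((hA.add hB).add hC).sub hD).sub hE).add hG
    refine H.congr_deriv ?_
    -- now the algebra
    have hx0' : x ≠ 0 := ne_of_gt hx0
    have hx1'' : (1:ℝ) - x ≠ 0 := ne_of_gt hx1'
    have hxm1 : x - 1 ≠ 0 := fun hc => hx1'' (by linarith [hc])
    have e1 : L2 x = Real.pi^2/6 - Real.log x * Real.log (1-x) - L2 (1-x) := by
      have := L2_reflection (x := x) ⟨hx0, hx1⟩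
      linarith
    have e2 : L2 w = -L2 (1-x) - (1/2) * Real.log x ^ 2 := by
      have hl := L2_landen (y := 1-x) ⟨hx1', hx12'⟩
      rw [show (1-x)/((1-x)-1) = 1 - 1/x by
        rw [div_eq_iff (show (1-x)-1 ≠ 0 by intro hc; apply hx0'; linarith)]
        field_simp
        ring] at hl
      rw [show (1:ℝ) - (1-x) = x by ring] at hl
      rw [← hw] at hl
      linarith
    have hwrew : w = (x - 1)/x := by rw [hw]; field_simp
    rw [e1, e2, hwrew]
    field_simp
    simp only [Pi.pow_apply]; ring
  have hconst := const_on_Ioo hd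
  have hne : (𝓝[Ioo (1/2:ℝ) 1] 1).NeBot := neBot_Ioo_right (by norm_num)
  have hmemIcc : ∀ t ∈ Ioo (1/2:ℝ) 1, t ∈ Icc (-1:ℝ) 1 :=
    fun t ht => ⟨by linarith [ht.1], ht.2.le⟩
  have hmem1 : ∀ t ∈ Ioo (1/2:ℝ) 1, 1 - t ∈ Icc (-1:ℝ) 1 :=
    fun t ht => ⟨by linarith [ht.2], by linarith [ht.1]⟩
  have hmemw : ∀ t ∈ Ioo (1/2:ℝ) 1, 1 - 1/t ∈ Icc (-1:ℝ) 1 := by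
    intro t ht
    have ht0 : (0:ℝ) < t := by linarith [ht.1]
    have h1 : 1 < 1/t := by rw [lt_div_iff₀ ht0]; linarith [ht.2]
    have h2 : 1/t < 2 := by rw [div_lt_iff₀ ht0]; linarith [ht.1]
    exact ⟨by linarith, by linarith⟩
  -- limit as x → 1⁻
  have hlim : Tendsto F (𝓝[Ioo (1/2:ℝ) 1] 1) (𝓝 (∑' n : ℕ, 1 / ((n:ℝ) + 1) ^ 3)) := by
    have t1 : Tendsto Li3 (𝓝[Ioo (1/2:ℝ) 1] 1) (𝓝 (Li3 1)) :=
      tendsto_comp_within (φ := id) continuousOn_Li3 (by norm_num)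
        (tendsto_id.mono_left nhdsWithin_le_nhds) hmemIcc
    have hsub : Tendsto (fun t : ℝ => 1 - t) (𝓝[Ioo (1/2:ℝ) 1] 1) (𝓝 0) := by
      have h : Tendsto (fun t : ℝ => 1 - t) (𝓝 (1:ℝ)) (𝓝 (1 - 1)) :=
        tendsto_const_nhds.sub tendsto_id
      rw [sub_self] at h
      exact h.mono_left nhdsWithin_le_nhds
    have t2 : Tendsto (fun t => Li3 (1 - t)) (𝓝[Ioo (1/2:ℝ) 1] 1) (𝓝 (Li3 0)) :=
      tendsto_comp_within continuousOn_Li3 (by norm_num) hsub hmem1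
    have t3 : Tendsto (fun t => Li3 (1 - 1/t)) (𝓝[Ioo (1/2:ℝ) 1] 1) (𝓝 (Li3 0)) := by
      apply tendsto_comp_within continuousOn_Li3 (by norm_num) _ hmemw
      have h0 : Tendsto (fun t : ℝ => 1 - 1/t) (𝓝 (1:ℝ)) (𝓝 (1 - 1/1)) :=
        tendsto_const_nhds.sub (tendsto_const_nhds.div tendsto_id (by norm_num))
      rw [show (1:ℝ) - 1/1 = 0 by norm_num] at h0
      exact h0.mono_left nhdsWithin_le_nhds
    have tlog : Tendsto (fun t : ℝ => Real.log t) (𝓝[Ioo (1/2:ℝ) 1] 1) (𝓝 0) := by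
      have h := (Real.continuousAt_log (by norm_num : (1:ℝ) ≠ 0)).tendsto
      rw [Real.log_one] at h
      exact h.mono_left nhdsWithin_le_nhds
    have tmul : Tendsto (fun t : ℝ => Real.log t * Real.log (1 - t))
        (𝓝[Ioo (1/2:ℝ) 1] 1) (𝓝 0) := by
      have hφ : Tendsto (fun t : ℝ => 1 - t) (𝓝[Ioo (1/2:ℝ) 1] 1) (𝓝[>] 0) := by
        apply tendsto_nhdsWithin_of_tendsto_nhds_of_eventually_within _ hsub
        filter_upwards [self_mem_nhdsWithin] with t ht
        exact sub_pos.2 ht.2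
      have := tendsto_log_one_sub_mul_log.comp hφ
      refine this.congr fun t => ?_
      simp only [Function.comp]
      rw [show (1:ℝ) - (1 - t) = t by ring]
    have tD : Tendsto (fun t : ℝ => Real.log t ^ 3 / 6) (𝓝[Ioo (1/2:ℝ) 1] 1) (𝓝 0) := by
      have := ((tlog.pow 3)).div_const (6:ℝ)
      simpa using this
    have tE : Tendsto (fun t : ℝ => (Real.pi^2/6) * Real.log t)
        (𝓝[Ioo (1/2:ℝ) 1] 1) (𝓝 0) := by
      have := tlog.const_mul (Real.pi^2/6)
      simpa using this
    have tG : Tendsto (fun t : ℝ => (1/2) * Real.log t ^ 2 * Real.log (1 - t))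
        (𝓝[Ioo (1/2:ℝ) 1] 1) (𝓝 0) := by
      have h := (tlog.const_mul (1/2 : ℝ)).mul tmul
      rw [mul_zero] at h
      refine h.congr fun t => ?_
      ring
    have := ((((t1.add t2).add t3).sub tD).sub tE).add tG
    rw [Li3_zero, Li3_one] at this
    simpa only [add_zero, sub_zero] using this
  intro x hx
  exact const_eval hconst hne hlim hx

theorem li3_half :
    Li3 (1 / 2) = (7 / 8) * (∑' n : ℕ, 1 / ((n : ℝ) + 1) ^ 3)
      - (Real.pi ^ 2 / 12) * Real.log 2 + (1 / 6) * Real.log 2 ^ 3 := by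
  set S := ∑' n : ℕ, 1 / ((n : ℝ) + 1) ^ 3 with hS
  set F : ℝ → ℝ := fun x => Li3 x + Li3 (1 - x) + Li3 (1 - 1/x)
      - Real.log x ^ 3 / 6 - (Real.pi^2/6) * Real.log x
      + (1/2) * Real.log x ^ 2 * Real.log (1 - x) with hF
  have hne : (𝓝[Ioo (1/2:ℝ) 1] (1/2)).NeBot := neBot_Ioo_left (by norm_num)
  have hmemIcc : ∀ t ∈ Ioo (1/2:ℝ) 1, t ∈ Icc (-1:ℝ) 1 :=
    fun t ht => ⟨by linarith [ht.1], ht.2.le⟩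
  have hmem1 : ∀ t ∈ Ioo (1/2:ℝ) 1, 1 - t ∈ Icc (-1:ℝ) 1 :=
    fun t ht => ⟨by linarith [ht.2], by linarith [ht.1]⟩
  have hmemw : ∀ t ∈ Ioo (1/2:ℝ) 1, 1 - 1/t ∈ Icc (-1:ℝ) 1 := by
    intro t ht
    have ht0 : (0:ℝ) < t := by linarith [ht.1]
    have h1 : 1 ≤ 1/t := by rw [le_div_iff₀ ht0]; linarith [ht.2]
    have h2 : 1/t ≤ 2 := by rw [div_le_iff₀ ht0]; linarith [ht.1]
    exact ⟨by linarith, by linarith⟩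
  -- limit of F at 1/2 from the right
  have hlim : Tendsto F (𝓝[Ioo (1/2:ℝ) 1] (1/2))
      (𝓝 (Li3 (1/2) + Li3 (1/2) + Li3 (-1)
        - Real.log (1/2) ^ 3 / 6 - (Real.pi^2/6) * Real.log (1/2)
        + (1/2) * Real.log (1/2) ^ 2 * Real.log (1/2))) := by
    have t1 : Tendsto Li3 (𝓝[Ioo (1/2:ℝ) 1] (1/2)) (𝓝 (Li3 (1/2))) :=
      tendsto_comp_within (φ := id) continuousOn_Li3 (by norm_num)
        (tendsto_id.mono_left nhdsWithin_le_nhds) hmemIcc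
    have hsub : Tendsto (fun t : ℝ => 1 - t) (𝓝[Ioo (1/2:ℝ) 1] (1/2)) (𝓝 (1/2)) := by
      have h : Tendsto (fun t : ℝ => 1 - t) (𝓝 (1/2:ℝ)) (𝓝 (1 - 1/2)) :=
        tendsto_const_nhds.sub tendsto_id
      rw [show (1:ℝ) - 1/2 = 1/2 by norm_num] at h
      exact h.mono_left nhdsWithin_le_nhds
    have t2 : Tendsto (fun t => Li3 (1 - t)) (𝓝[Ioo (1/2:ℝ) 1] (1/2)) (𝓝 (Li3 (1/2))) :=
      tendsto_comp_within continuousOn_Li3 (by norm_num) hsub hmem1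
    have t3 : Tendsto (fun t => Li3 (1 - 1/t)) (𝓝[Ioo (1/2:ℝ) 1] (1/2)) (𝓝 (Li3 (-1))) := by
      apply tendsto_comp_within continuousOn_Li3 (by norm_num) _ hmemw
      have h0 : Tendsto (fun t : ℝ => 1 - 1/t) (𝓝 (1/2:ℝ)) (𝓝 (1 - 1/(1/2))) :=
        tendsto_const_nhds.sub (tendsto_const_nhds.div tendsto_id (by norm_num))
      rw [show (1:ℝ) - 1/(1/2) = -1 by norm_num] at h0
      exact h0.mono_left nhdsWithin_le_nhds
    have tlog : Tendsto (fun t : ℝ => Real.log t) (𝓝[Ioo (1/2:ℝ) 1] (1/2))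
        (𝓝 (Real.log (1/2))) := by
      have h := (Real.continuousAt_log (by norm_num : (1/2:ℝ) ≠ 0)).tendsto
      exact h.mono_left nhdsWithin_le_nhds
    have tlog1 : Tendsto (fun t : ℝ => Real.log (1 - t)) (𝓝[Ioo (1/2:ℝ) 1] (1/2))
        (𝓝 (Real.log (1/2))) := by
      have h := (Real.continuousAt_log (by norm_num : (1/2:ℝ) ≠ 0)).tendsto
      have := h.comp hsub
      exact this
    exact ((((t1.add t2).add t3).sub ((tlog.pow 3).div_const 6)).sub
      (tlog.const_mul (Real.pi^2/6))).add (((tlog.pow 2).const_mul (1/2:ℝ)).mul tlog1)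
  have hFconst : ∀ᶠ x in 𝓝[Ioo (1/2:ℝ) 1] (1/2), F x = S := by
    filter_upwards [self_mem_nhdsWithin] with x hx
    exact F_eq x hx
  have hlim2 : Tendsto F (𝓝[Ioo (1/2:ℝ) 1] (1/2)) (𝓝 S) :=
    Tendsto.congr' (by filter_upwards [hFconst] with x hx; exact hx.symm) tendsto_const_nhds
  have hkey := tendsto_nhds_unique hlim hlim2
  have hlog2 : Real.log (1/2) = -Real.log 2 := by
    rw [one_div, Real.log_inv]
  rw [hlog2, Li3_neg_one, ← hS] at hkey
  nlinarith [hkey]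
end

section
/- The double Euler sum satisfies ζ(2,1) = ζ(3), i.e. ∑_{n=1}^∞ (1/n²)·∑_{m=1}^{n−1} (1/m) = ∑_{n=1}^∞ 1/n³. -/
open Finset Filter Topology

noncomputable def Hh (n : ℕ) : ℝ := ∑ m ∈ Finset.Icc 1 n, (1 / (m : ℝ))

noncomputable def aa (j k : ℕ) : ℝ := 1 / (((j : ℝ) + 1) * ((j : ℝ) + (k : ℝ) + 2) ^ 2)

noncomputable def gg (j k : ℕ) : ℝ := 1 / (((j : ℝ) + 1) * (((k : ℝ) + 1) * ((j : ℝ) + (k : ℝ) + 2)))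

lemma aa_nonneg (j k : ℕ) : 0 ≤ aa j k := by unfold aa; positivity

lemma gg_eq_add (j k : ℕ) : gg j k = aa j k + aa k j := by
  unfold gg aa
  have h1 : ((j : ℝ) + 1) ≠ 0 := by positivity
  have h2 : ((k : ℝ) + 1) ≠ 0 := by positivity
  have h3 : ((j : ℝ) + (k : ℝ) + 2) ≠ 0 := by positivity
  have h4 : ((k : ℝ) + (j : ℝ) + 2) = ((j : ℝ) + (k : ℝ) + 2) := by ring
  rw [h4]; field_simp; ring

lemma gg_eq_tele (j k : ℕ) :
    gg j k = (1 / ((j : ℝ) + 1) ^ 2) * (1 / ((k : ℝ) + 1) - 1 / ((j : ℝ) + (k : ℝ) + 2)) := by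
  unfold gg
  have h1 : ((j : ℝ) + 1) ≠ 0 := by positivity
  have h2 : ((k : ℝ) + 1) ≠ 0 := by positivity
  have h3 : ((j : ℝ) + (k : ℝ) + 2) ≠ 0 := by positivity
  field_simp; ring

lemma summable_shift_sq : Summable fun k : ℕ => 1 / ((k : ℝ) + 1) ^ 2 := by
  have := (summable_nat_add_iff (f := fun n : ℕ => 1 / (n : ℝ) ^ 2) 1).2
    (Real.summable_one_div_nat_pow.mpr one_lt_two)
  exact this.congr fun k => by push_cast; ring_nf

lemma summable_shift_cube : Summable fun k : ℕ => 1 / ((k : ℝ) + 1) ^ 3 := by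
  have := (summable_nat_add_iff (f := fun n : ℕ => 1 / (n : ℝ) ^ 3) 1).2
    (Real.summable_one_div_nat_pow.mpr (by norm_num))
  exact this.congr fun k => by push_cast; ring_nf

lemma summable_aa_right (j : ℕ) : Summable fun k => aa j k := by
  apply Summable.of_nonneg_of_le (fun k => aa_nonneg j k) _ summable_shift_sq
  intro k
  unfold aa
  apply one_div_le_one_div_of_le (by positivity)
  have : ((k : ℝ) + 1) ^ 2 ≤ ((j : ℝ) + (k : ℝ) + 2) ^ 2 := by
    apply pow_le_pow_left₀ (by positivity) (by have := Nat.cast_nonneg (α := ℝ) j; linarith)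
  calc ((k : ℝ) + 1) ^ 2 ≤ ((j : ℝ) + (k : ℝ) + 2) ^ 2 := this
    _ ≤ ((j : ℝ) + 1) * ((j : ℝ) + (k : ℝ) + 2) ^ 2 := by
        nlinarith [sq_nonneg ((j : ℝ) + (k : ℝ) + 2), Nat.cast_nonneg (α := ℝ) j]

lemma sum_range_sq_le (j K : ℕ) :
    ∑ k ∈ Finset.range K, (1 / (((j : ℝ) + (k : ℝ) + 2) ^ 2)) ≤ 1 / ((j : ℝ) + 1) := by
  have tele : ∑ k ∈ Finset.range K,
      (1 / ((j : ℝ) + (k : ℝ) + 1) - 1 / ((j : ℝ) + (k : ℝ) + 2)) =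
      1 / ((j : ℝ) + 1) - 1 / ((j : ℝ) + (K : ℝ) + 1) := by
    induction K with
    | zero => simp
    | succ K ih =>
        rw [Finset.sum_range_succ, ih]
        push_cast
        ring
  calc ∑ k ∈ Finset.range K, (1 / (((j : ℝ) + (k : ℝ) + 2) ^ 2))
      ≤ ∑ k ∈ Finset.range K,
        (1 / ((j : ℝ) + (k : ℝ) + 1) - 1 / ((j : ℝ) + (k : ℝ) + 2)) := by
        apply Finset.sum_le_sum
        intro k _
        have h1 : (0:ℝ) < (j : ℝ) + (k : ℝ) + 1 := by positivity
        have h2 : (0:ℝ) < (j : ℝ) + (k : ℝ) + 2 := by positivity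
        rw [div_sub_div _ _ (ne_of_gt h1) (ne_of_gt h2)]
        rw [div_le_div_iff₀ (by positivity) (by positivity)]
        ring_nf
        nlinarith
    _ = 1 / ((j : ℝ) + 1) - 1 / ((j : ℝ) + (K : ℝ) + 1) := tele
    _ ≤ 1 / ((j : ℝ) + 1) := by
        have : (0:ℝ) < (j : ℝ) + (K : ℝ) + 1 := by positivity
        have := one_div_pos.mpr this
        linarith

lemma tsum_aa_le (j : ℕ) : ∑' k, aa j k ≤ 1 / ((j : ℝ) + 1) ^ 2 := by
  apply Real.tsum_le_of_sum_range_le (fun k => aa_nonneg j k)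
  intro K
  have : ∑ k ∈ Finset.range K, aa j k
      = (1 / ((j : ℝ) + 1)) * ∑ k ∈ Finset.range K, (1 / (((j : ℝ) + (k : ℝ) + 2) ^ 2)) := by
    rw [Finset.mul_sum]
    apply Finset.sum_congr rfl
    intro k _
    unfold aa
    rw [div_mul_div_comm, one_mul]
  rw [this]
  calc (1 / ((j : ℝ) + 1)) * ∑ k ∈ Finset.range K, (1 / (((j : ℝ) + (k : ℝ) + 2) ^ 2))
      ≤ (1 / ((j : ℝ) + 1)) * (1 / ((j : ℝ) + 1)) := by
        apply mul_le_mul_of_nonneg_left (sum_range_sq_le j K) (by positivity)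
    _ = 1 / ((j : ℝ) + 1) ^ 2 := by rw [div_mul_div_comm, one_mul]; ring_nf

lemma summable_aa : Summable (fun p : ℕ × ℕ => aa p.1 p.2) := by
  rw [summable_prod_of_nonneg (fun p => aa_nonneg p.1 p.2)]
  refine ⟨fun j => summable_aa_right j, ?_⟩
  apply Summable.of_nonneg_of_le (fun j => tsum_nonneg fun k => aa_nonneg j k)
    (fun j => tsum_aa_le j) summable_shift_sq

lemma summable_aa_swap : Summable (fun p : ℕ × ℕ => aa p.2 p.1) := by
  have := (Equiv.prodComm ℕ ℕ).summable_iff (f := fun p : ℕ × ℕ => aa p.2 p.1)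
  exact this.1 summable_aa

lemma summable_gg : Summable (fun p : ℕ × ℕ => gg p.1 p.2) :=
  (summable_aa.add summable_aa_swap).congr fun p => (gg_eq_add p.1 p.2).symm

lemma Hh_succ (n : ℕ) : Hh (n + 1) = Hh n + 1 / ((n : ℝ) + 1) := by
  unfold Hh
  rw [Finset.sum_Icc_succ_top (by omega)]
  push_cast
  ring_nf

lemma Hh_eq_range (n : ℕ) : Hh n = ∑ j ∈ Finset.range n, (1 / ((j : ℝ) + 1)) := by
  induction n with
  | zero => simp [Hh]
  | succ n ih => rw [Hh_succ, Finset.sum_range_succ, ih]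

lemma tele2 (c j : ℕ) :
    ∑ k ∈ Finset.range j, ((1 / ((c : ℝ) + (k : ℝ) + 1)) - (1 / ((c : ℝ) + (k : ℝ) + 2))) =
      1 / ((c : ℝ) + 1) - 1 / ((c : ℝ) + (j : ℝ) + 1) := by
  induction j with
  | zero => simp
  | succ j ihj =>
      rw [Finset.sum_range_succ, ihj]
      push_cast
      ring

lemma tele_partial (j K : ℕ) :
    ∑ k ∈ Finset.range K, (1 / ((k : ℝ) + 1) - 1 / ((j : ℝ) + (k : ℝ) + 2)) =
      Hh (j + 1) - ∑ k ∈ Finset.range (j + 1), (1 / ((K : ℝ) + (k : ℝ) + 1)) := by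
  induction K with
  | zero =>
      rw [Hh_eq_range]
      simp only [Finset.range_zero, Finset.sum_empty, Nat.cast_zero]
      have : ∑ k ∈ Finset.range (j + 1), (1 / ((0 : ℝ) + (k : ℝ) + 1))
          = ∑ k ∈ Finset.range (j + 1), (1 / ((k : ℝ) + 1)) := by
        apply Finset.sum_congr rfl; intro k _; ring_nf
      rw [this]
      ring
  | succ K ih =>
      rw [Finset.sum_range_succ, ih]
      have expand : ∑ k ∈ Finset.range (j + 1), (1 / ((((K + 1 : ℕ)) : ℝ) + (k : ℝ) + 1)) =
          ∑ k ∈ Finset.range (j + 1), (1 / ((K : ℝ) + (k : ℝ) + 2)) := by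
        apply Finset.sum_congr rfl
        intro k _
        push_cast
        ring_nf
      rw [expand]
      have t2 := tele2 K (j + 1)
      rw [Finset.sum_sub_distrib] at t2
      have e2 : 1 / ((K : ℝ) + ((j : ℝ) + 1) + 1) = 1 / ((j : ℝ) + (K : ℝ) + 2) := by ring_nf
      push_cast [e2] at t2
      linarith

lemma hasSum_tele (j : ℕ) :
    HasSum (fun k : ℕ => 1 / ((k : ℝ) + 1) - 1 / ((j : ℝ) + (k : ℝ) + 2)) (Hh (j + 1)) := by
  rw [hasSum_iff_tendsto_nat_of_nonneg]
  · have h1 : Tendsto (fun K : ℕ => ∑ k ∈ Finset.range (j + 1), (1 / ((K : ℝ) + (k : ℝ) + 1)))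
        atTop (𝓝 0) := by
      apply squeeze_zero (g := fun K : ℕ => ((j : ℝ) + 1) * (1 / ((K : ℝ) + 1)))
      · intro K; positivity
      · intro K
        calc ∑ k ∈ Finset.range (j + 1), (1 / ((K : ℝ) + (k : ℝ) + 1))
            ≤ ∑ _k ∈ Finset.range (j + 1), (1 / ((K : ℝ) + 1)) := by
              apply Finset.sum_le_sum
              intro k _
              apply one_div_le_one_div_of_le (by positivity)
              have := Nat.cast_nonneg (α := ℝ) k; linarith
          _ = ((j : ℝ) + 1) * (1 / ((K : ℝ) + 1)) := by
              rw [Finset.sum_const, Finset.card_range]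
              push_cast
              ring
      · have := tendsto_one_div_add_atTop_nhds_zero_nat.const_mul ((j : ℝ) + 1)
        simpa using this
    have h2 := (tendsto_const_nhds (x := Hh (j + 1)) (f := atTop (α := ℕ))).sub h1
    rw [sub_zero] at h2
    apply Tendsto.congr' _ h2
    filter_upwards with K
    exact (tele_partial j K).symm
  · intro k
    have h1 : (0:ℝ) < (k : ℝ) + 1 := by positivity
    have h2 : ((k : ℝ) + 1) ≤ (j : ℝ) + (k : ℝ) + 2 := by
      have := Nat.cast_nonneg (α := ℝ) j; linarith
    have := one_div_le_one_div_of_le h1 h2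
    linarith

noncomputable def Lf (n : ℕ) : ℝ := (1 / ((n : ℝ) + 1) ^ 2) * Hh n

lemma tsum_gg_inner (j : ℕ) :
    HasSum (fun k => gg j k) ((1 / ((j : ℝ) + 1) ^ 2) * Hh (j + 1)) := by
  have h := (hasSum_tele j).mul_left (1 / ((j : ℝ) + 1) ^ 2)
  exact h.congr_fun fun k => (gg_eq_tele j k)

lemma tsum_gg_eq :
    ∑' p : ℕ × ℕ, gg p.1 p.2 = ∑' j : ℕ, ((1 / ((j : ℝ) + 1) ^ 2) * Hh (j + 1)) := by
  rw [Summable.tsum_prod' summable_gg (fun j => summable_gg.prod_factor j)]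
  exact tsum_congr fun j => (tsum_gg_inner j).tsum_eq

lemma summable_Lf_shift : Summable (fun j : ℕ => (1 / ((j : ℝ) + 1) ^ 2) * Hh (j + 1)) := by
  have h := summable_gg.prod
  exact h.congr fun j => (tsum_gg_inner j).tsum_eq

lemma hsplit (j : ℕ) : (1 / ((j : ℝ) + 1) ^ 2) * Hh (j + 1)
    = Lf j + 1 / ((j : ℝ) + 1) ^ 3 := by
  rw [Hh_succ, Lf]
  field_simp

lemma summable_Lf : Summable Lf := by
  have h := summable_Lf_shift.sub summable_shift_cube
  exact h.congr fun j => by rw [hsplit j]; ring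

lemma tsum_gg_split :
    ∑' p : ℕ × ℕ, gg p.1 p.2 = (∑' n : ℕ, Lf n) + ∑' n : ℕ, 1 / ((n : ℝ) + 1) ^ 3 := by
  rw [tsum_gg_eq, tsum_congr hsplit, Summable.tsum_add summable_Lf summable_shift_cube]

lemma hasSum_A_diag :
    HasSum (fun n : ℕ => Lf (n + 1)) (∑' p : ℕ × ℕ, aa p.1 p.2) := by
  have h := summable_aa.hasSum.tsum_fiberwise (fun p : ℕ × ℕ => p.1 + p.2)
  have hfib : ∀ n : ℕ,
      (∑' p : ((fun p : ℕ × ℕ => p.1 + p.2) ⁻¹' {n}), aa (p : ℕ × ℕ).1 (p : ℕ × ℕ).2)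
        = Lf (n + 1) := by
    intro n
    have hset : ((fun p : ℕ × ℕ => p.1 + p.2) ⁻¹' {n}) = ↑(Finset.HasAntidiagonal.antidiagonal n) := by
      ext p
      simp [Finset.HasAntidiagonal.mem_antidiagonal]
    rw [hset]
    rw [Finset.tsum_subtype' (Finset.HasAntidiagonal.antidiagonal n) (fun p : ℕ × ℕ => aa p.1 p.2)]
    rw [Finset.Nat.sum_antidiagonal_eq_sum_range_succ_mk]
    have hterm : ∀ j ∈ Finset.range (n + 1),
        aa j (n - j) = (1 / ((n : ℝ) + 2) ^ 2) * (1 / ((j : ℝ) + 1)) := by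
      intro j hj
      rw [Finset.mem_range] at hj
      unfold aa
      have hc : ((n - j : ℕ) : ℝ) = (n : ℝ) - (j : ℝ) := by
        rw [Nat.cast_sub (by omega)]
      rw [hc]
      have : (j : ℝ) + ((n : ℝ) - (j : ℝ)) + 2 = (n : ℝ) + 2 := by ring
      rw [this, div_mul_div_comm, one_mul]
      ring_nf
    rw [Finset.sum_congr rfl hterm, ← Finset.mul_sum, ← Hh_eq_range]
    unfold Lf
    push_cast
    ring_nf
  have heq : (fun n : ℕ =>
      (∑' p : ((fun p : ℕ × ℕ => p.1 + p.2) ⁻¹' {n}), aa (p : ℕ × ℕ).1 (p : ℕ × ℕ).2))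
      = fun n => Lf (n + 1) := funext hfib
  rw [heq] at h
  exact h

theorem zeta_2_1_eq_zeta_3 :
    ∑' n : ℕ, (1 / ((n : ℝ) + 1) ^ 2) * ∑ m ∈ Finset.Icc 1 n, (1 / (m : ℝ)) =
      ∑' n : ℕ, 1 / ((n : ℝ) + 1) ^ 3 := by
  have hgoalL : ∑' n : ℕ, (1 / ((n : ℝ) + 1) ^ 2) * ∑ m ∈ Finset.Icc 1 n, (1 / (m : ℝ))
      = ∑' n : ℕ, Lf n := by
    exact tsum_congr fun n => rfl
  rw [hgoalL]
  set A := ∑' p : ℕ × ℕ, aa p.1 p.2 with hA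
  -- L = A
  have hLA : ∑' n : ℕ, Lf n = A := by
    rw [Summable.tsum_eq_zero_add summable_Lf, hasSum_A_diag.tsum_eq]
    have : Lf 0 = 0 := by unfold Lf Hh; simp
    rw [this, zero_add]
  -- T = A + A
  have hswap : ∑' p : ℕ × ℕ, aa p.2 p.1 = A := by
    exact (Equiv.prodComm ℕ ℕ).tsum_eq (fun p : ℕ × ℕ => aa p.1 p.2)
  have hT2 : ∑' p : ℕ × ℕ, gg p.1 p.2 = A + A := by
    calc ∑' p : ℕ × ℕ, gg p.1 p.2
        = ∑' p : ℕ × ℕ, (aa p.1 p.2 + aa p.2 p.1) := tsum_congr fun p => gg_eq_add p.1 p.2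
      _ = A + ∑' p : ℕ × ℕ, aa p.2 p.1 := Summable.tsum_add summable_aa summable_aa_swap
      _ = A + A := by rw [hswap]
  have hT1 := tsum_gg_split
  rw [hT2] at hT1
  linarith
end
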